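/- In the heterogeneous regret game, if v ≥ 1/p, then the profile in which every player chooses risky is a pure strategy Nash equilibrium, regardless of the players' individual coefficients of regret aversion κ_i ≥ 0. -/
import Mathlib


namespace RegretGame

/-- An action in the regret game: choose the risky lottery or the safe lottery. -/
inductive Act : Type
  | risky : Act
  | safe : Act
deriving DecidableEq, Repr

/-- `numRisky a i` is the number of players other than `i` choosing the risky lottery
at the action profile `a`. -/
def numRisky {N : ℕ} (a : Fin N → Act) (i : Fin N) : ℕ :=
  (Finset.univ.filter (fun j => j ≠ i ∧ a j = Act.risky)).card

/-- Player `i`'s expected payoff in the heterogeneous regret game at action profile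
`a`, where player `i` has her own coefficient of regret aversion `κ i`. -/
noncomputable def payoffHet {N : ℕ} (p v : ℝ) (κ : Fin N → ℝ) (q : ℕ → ℝ)
    (a : Fin N → Act) (i : Fin N) : ℝ :=
  if a i = Act.risky then p * v - (1 - p) * κ i
  else 1 - p * q (numRisky a i) * κ i * (v - 1)

/-- A pure strategy Nash equilibrium of the heterogeneous regret game: no player can
strictly increase her expected payoff by unilaterally changing her own action. -/
def IsNashHet {N : ℕ} (p v : ℝ) (κ : Fin N → ℝ) (q : ℕ → ℝ) (a : Fin N → Act) : Prop :=
  ∀ (i : Fin N) (b : Act),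
    payoffHet p v κ q (Function.update a i b) i ≤ payoffHet p v κ q a i

/-- In the heterogeneous regret game, if `v ≥ 1/p` then the all-risky profile is a
pure strategy Nash equilibrium, regardless of the players' individual coefficients of
regret aversion `κ i ≥ 0`. -/
theorem regret_game_het_all_risky_nash
    (N : ℕ) (hN : 2 ≤ N) (p v : ℝ)
    (hp : 0 < p ∧ p < 1) (hv : 1 < v)
    (κ : Fin N → ℝ) (hκ : ∀ i, 0 ≤ κ i)
    (q : ℕ → ℝ)
    (hq01 : ∀ m ≤ N - 1, 0 ≤ q m ∧ q m ≤ 1)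
    (hq0 : q 0 = 0) (hqN : q (N - 1) = 1)
    (hqmono : ∀ m₁ m₂, m₁ < m₂ → m₂ ≤ N - 1 → q m₁ < q m₂)
    (hthresh : v ≥ 1 / p) :
    IsNashHet p v κ q (fun _ : Fin N => Act.risky) := by
  intro i b
  have hpv : 1 ≤ p * v := by
    rw [ge_iff_le, div_le_iff₀ hp.1] at hthresh
    linarith
  cases b with
  | risky =>
      have : Function.update (fun _ : Fin N => Act.risky) i Act.risky
          = (fun _ : Fin N => Act.risky) := by
        funext j
        by_cases h : j = i <;> simp [Function.update, h]
      rw [this]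
  | safe =>
      have hcard : numRisky (Function.update (fun _ : Fin N => Act.risky) i Act.safe) i
          = N - 1 := by
        unfold numRisky
        have : (Finset.univ.filter (fun j : Fin N =>
            j ≠ i ∧ Function.update (fun _ : Fin N => Act.risky) i Act.safe j = Act.risky))
            = Finset.univ.filter (fun j => j ≠ i) := by
          apply Finset.filter_congr
          intro j _
          by_cases h : j = i <;> simp [Function.update, h]
        rw [this, Finset.filter_ne', Finset.card_erase_of_mem (Finset.mem_univ i)]
        simp
      unfold payoffHet
      simp only [Function.update_self, hcard, hqN]
      have : (0:ℝ) ≤ (p * v - 1) * (1 + κ i) := by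
        have := hκ i
        nlinarith
      simp only [if_neg (by simp : ¬ (Act.safe = Act.risky)), if_pos rfl, if_true]
      nlinarith [hκ i]


end RegretGame
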